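/- The composite of two finitary polynomial functors is a finitary polynomial functor: given finitary polynomials P = (J ← E₁ → B₁ → I) and Q = (I ← E₂ → B₂ → K) over sets, there exists a finitary polynomial R = (J ← E₃ → B₃ → K) whose associated functor R̲ : Set^J → Set^K is naturally isomorphic to the composite Q̲ ∘ P̲. -/

import Mathlib

open CategoryTheory CategoryTheory.Limits

/-- The polynomial functor `Set^J → Set^I` associated to a polynomial
`J ←s− E −p→ B −t→ I` over sets:
`P̲(X) i = ⨿_{b ∈ t⁻¹(i)} ∏_{e ∈ p⁻¹(b)} X (s e)`.
(Here `Set^J` is modelled as the category `J → Type` of `J`-indexed families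
of sets.) -/
def polyFunctor {J I E B : Type} (s : E → J) (pf : E → B) (t : B → I) :
    (J → Type) ⥤ (I → Type) where
  obj X i := Σ b : {b : B // t b = i}, ∀ e : {e : E // pf e = (b : B)}, X (s e)
  map f i := TypeCat.ofHom fun x => ⟨x.1, fun e => f (s e) (x.2 e)⟩

def B3 {I B₁ E₂ B₂ : Type} (t₁ : B₁ → I) (s₂ : E₂ → I) (p₂ : E₂ → B₂) : Type :=
  Σ b : B₂, ∀ e : {e : E₂ // p₂ e = b}, {b₁ : B₁ // t₁ b₁ = s₂ e}

def E3 {I E₁ B₁ E₂ B₂ : Type} (p₁ : E₁ → B₁) (t₁ : B₁ → I) (s₂ : E₂ → I) (p₂ : E₂ → B₂) : Type :=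
  Σ β : B3 t₁ s₂ p₂, Σ e₂ : {e : E₂ // p₂ e = β.1}, {e₁ : E₁ // p₁ e₁ = (β.2 e₂ : B₁)}

def s3 {J I E₁ B₁ E₂ B₂ : Type} (s₁ : E₁ → J) (p₁ : E₁ → B₁) (t₁ : B₁ → I) (s₂ : E₂ → I)
    (p₂ : E₂ → B₂) : E3 p₁ t₁ s₂ p₂ → J := fun x => s₁ x.2.2

def p3 {I E₁ B₁ E₂ B₂ : Type} (p₁ : E₁ → B₁) (t₁ : B₁ → I) (s₂ : E₂ → I) (p₂ : E₂ → B₂) :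
    E3 p₁ t₁ s₂ p₂ → B3 t₁ s₂ p₂ := Sigma.fst

def t3 {I K B₁ E₂ B₂ : Type} (t₁ : B₁ → I) (s₂ : E₂ → I) (p₂ : E₂ → B₂) (t₂ : B₂ → K) :
    B3 t₁ s₂ p₂ → K := fun β => t₂ β.1

/-- STATEMENT: the composite of two finitary polynomial functors is a finitary
polynomial functor: given finitary polynomials `P = (J ← E₁ → B₁ → I)` and
`Q = (I ← E₂ → B₂ → K)` over sets, there is a finitary polynomial
`R = (J ← E₃ → B₃ → K)` whose associated functor `Set^J → Set^K` is naturally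
isomorphic to the composite `Q̲ ∘ P̲`. -/
theorem stmt12 {J I K E₁ B₁ E₂ B₂ : Type}
    (s₁ : E₁ → J) (p₁ : E₁ → B₁) (t₁ : B₁ → I)
    (s₂ : E₂ → I) (p₂ : E₂ → B₂) (t₂ : B₂ → K)
    (h₁ : ∀ b : B₁, Finite {e : E₁ // p₁ e = b})
    (h₂ : ∀ b : B₂, Finite {e : E₂ // p₂ e = b}) :
    ∃ (E₃ B₃ : Type) (s₃ : E₃ → J) (p₃ : E₃ → B₃) (t₃ : B₃ → K),
      (∀ b : B₃, Finite {e : E₃ // p₃ e = b}) ∧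
      Nonempty (polyFunctor s₃ p₃ t₃ ≅ polyFunctor s₁ p₁ t₁ ⋙ polyFunctor s₂ p₂ t₂) := by
  refine ⟨E3 p₁ t₁ s₂ p₂, B3 t₁ s₂ p₂, s3 s₁ p₁ t₁ s₂ p₂, p3 p₁ t₁ s₂ p₂, t3 t₁ s₂ p₂ t₂, ?_, ?_⟩
  · intro β
    have : {x : E3 p₁ t₁ s₂ p₂ // p3 p₁ t₁ s₂ p₂ x = β} ≃
        Σ e₂ : {e : E₂ // p₂ e = β.1}, {e₁ : E₁ // p₁ e₁ = (β.2 e₂ : B₁)} := by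
      refine ⟨fun x => x.2 ▸ x.1.2, fun y => ⟨⟨β, y⟩, rfl⟩, ?_, fun y => rfl⟩
      rintro ⟨⟨β', y⟩, h⟩
      dsimp [p3] at h
      subst h
      rfl
    have : Finite (Σ e₂ : {e : E₂ // p₂ e = β.1}, {e₁ : E₁ // p₁ e₁ = (β.2 e₂ : B₁)}) := by
      have := h₂ β.1
      have := fun e₂ : {e : E₂ // p₂ e = β.1} => h₁ (β.2 e₂ : B₁)
      exact Finite.instSigma
    exact Finite.of_equiv _ ‹_ ≃ _›.symm
  · constructor
    refine NatIso.ofComponents (fun X => ?_) ?_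
    · refine { hom := fun k => TypeCat.ofHom fun x => ?_, inv := fun k => TypeCat.ofHom fun y => ?_, hom_inv_id := ?_, inv_hom_id := ?_ }
      · exact ⟨⟨x.1.1.1, x.1.2⟩, fun e₂ => ⟨x.1.1.2 e₂, fun e₁ => x.2 ⟨⟨x.1.1, e₂, e₁⟩, rfl⟩⟩⟩
      · refine ⟨⟨⟨y.1.1, fun e₂ => (y.2 e₂).1⟩, y.1.2⟩, ?_⟩
        rintro ⟨⟨β', e₂, e₁⟩, h⟩
        dsimp [p3] at h
        subst h
        exact (y.2 e₂).2 e₁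
      · funext k
        ext x
        obtain ⟨⟨⟨b₂, g⟩, hβ⟩, f⟩ := x
        show (⟨_, _⟩ : (polyFunctor (s3 s₁ p₁ t₁ s₂ p₂) (p3 p₁ t₁ s₂ p₂) (t3 t₁ s₂ p₂ t₂)).obj X k) = ⟨⟨⟨b₂, g⟩, hβ⟩, f⟩
        dsimp
        congr 1
        funext x
        obtain ⟨⟨β', e₂, e₁⟩, h⟩ := x
        dsimp [p3] at h
        subst h
        rfl
      · funext k
        ext y
        obtain ⟨⟨b₂, hb⟩, F⟩ := y
        dsimp
        congr 1
    · intro X Y f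
      funext k
      ext x
      rfl
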